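/- For every subshift X over a finite alphabet Λ and every ε > 0 there exists l₀ ∈ ℕ such that every block B ∈ B*(X) of length l ≥ l₀ satisfies d*(B, M_σ(X)) < ε, i.e., there exists a shift-invariant measure μ ∈ M_σ(X) with d*(B, μ) < ε. -/

import Mathlib

open MeasureTheory

/-- The left shift on `ℤ → Λ`: `(shiftZ x) i = x (i+1)`. -/
def shiftZ {Λ : Type*} (x : ℤ → Λ) : ℤ → Λ := fun i => x (i + 1)

/-- The block `x|_{[i, i+k)}` of length `k`. -/
def blockAt {Λ : Type*} (x : ℤ → Λ) (i : ℤ) (k : ℕ) : List Λ :=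
  List.ofFn fun j : Fin k => x (i + j.val)

/-- The frequency of occurrences of the block `C` in the block `B`. -/
noncomputable def Freq {Λ : Type*} (B C : List Λ) : ℝ :=
  (({i : ℕ | i + C.length ≤ B.length ∧
      ∀ j : Fin C.length, B[i + (j : ℕ)]? = C[(j : ℕ)]?}).ncard : ℝ) / (B.length : ℝ)

/-- The set `B*(X)` of (nonempty) finite blocks occurring in elements of `X`. -/
def BlocksOf {Λ : Type*} (X : Set (ℤ → Λ)) : Set (List Λ) :=
  {B | B ≠ [] ∧ ∃ x ∈ X, ∃ i : ℤ, blockAt x i B.length = B}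

/-- A subshift: a nonempty, closed, shift-invariant subset of `Λ^ℤ`. -/
def IsSubshift {Λ : Type*} [TopologicalSpace Λ] (X : Set (ℤ → Λ)) : Prop :=
  X.Nonempty ∧ IsClosed X ∧ shiftZ '' X = X

/-- The cylinder set associated with a block `C`. -/
def cyl {Λ : Type*} (C : List Λ) : Set (ℤ → Λ) :=
  {x | ∀ j : Fin C.length, x ((j : ℕ) : ℤ) = C.get j}

/-- `M(X)`: Borel probability measures carried by `X`. -/
def MeasOf {Λ : Type*} [MeasurableSpace Λ] (X : Set (ℤ → Λ)) :
    Set (Measure (ℤ → Λ)) :=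
  {μ | IsProbabilityMeasure μ ∧ μ X = 1}

/-- `M_σ(X)`: shift-invariant measures in `M(X)`. -/
def InvMeasOf {Λ : Type*} [MeasurableSpace Λ] (X : Set (ℤ → Λ)) :
    Set (Measure (ℤ → Λ)) :=
  {μ | μ ∈ MeasOf X ∧ Measure.map shiftZ μ = μ}

/-- `M_σ^erg(X)`: ergodic measures in `M_σ(X)`. -/
def ErgMeasOf {Λ : Type*} [MeasurableSpace Λ] (X : Set (ℤ → Λ)) :
    Set (Measure (ℤ → Λ)) :=
  {μ | μ ∈ InvMeasOf X ∧ Ergodic shiftZ μ}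

/-- An element of the combined space of blocks and measures. -/
abbrev Obj (Λ : Type*) [MeasurableSpace Λ] := List Λ ⊕ Measure (ℤ → Λ)

/-- The valuation of an object (block or measure) on a block `C`:
frequency for blocks, measure of the cylinder for measures. -/
noncomputable def objVal {Λ : Type*} [MeasurableSpace Λ] : Obj Λ → List Λ → ℝ
  | Sum.inl B => fun C => Freq B C
  | Sum.inr μ => fun C => (μ (cyl C)).toReal

/-- The metric `d*` on the combined space of blocks and measures. -/
noncomputable def dStar {Λ : Type*} [Fintype Λ] [MeasurableSpace Λ]
    (ω₁ ω₂ : Obj Λ) : ℝ :=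
  ∑' l : ℕ, (2 : ℝ) ^ (-(l : ℤ) - 1) *
    ∑ C : Fin (l + 1) → Λ, |objVal ω₁ (List.ofFn C) - objVal ω₂ (List.ofFn C)|

open Filter MeasureTheory Topology Set
open scoped ENNReal

section Aux
variable {Λ : Type*}

/-- shift by an arbitrary integer -/
def shiftBy (m : ℤ) (x : ℤ → Λ) : ℤ → Λ := fun j => x (j + m)

lemma shiftBy_shiftBy (a b : ℤ) (x : ℤ → Λ) : shiftBy a (shiftBy b x) = shiftBy (a + b) x := by
  funext j; simp [shiftBy, add_assoc]

lemma shiftZ_eq (x : ℤ → Λ) : shiftZ x = shiftBy 1 x := rfl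

lemma continuous_shiftBy [TopologicalSpace Λ] (m : ℤ) :
    Continuous (shiftBy m : (ℤ → Λ) → (ℤ → Λ)) :=
  continuous_pi fun _ => continuous_apply _

lemma continuous_shiftZ [TopologicalSpace Λ] :
    Continuous (shiftZ : (ℤ → Λ) → (ℤ → Λ)) :=
  continuous_pi fun _ => continuous_apply _

lemma shiftBy_mem {X : Set (ℤ → Λ)} (hσ : shiftZ '' X = X) (m : ℤ) :
    ∀ x ∈ X, shiftBy m x ∈ X := by
  have h1 : ∀ x ∈ X, shiftBy 1 x ∈ X := by
    intro x hx
    have : shiftZ x ∈ shiftZ '' X := Set.mem_image_of_mem _ hx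
    rw [hσ] at this
    exact this
  have hneg : ∀ x ∈ X, shiftBy (-1) x ∈ X := by
    intro x hx
    rw [← hσ] at hx
    obtain ⟨x', hx', rfl⟩ := hx
    have : shiftBy (-1) (shiftZ x') = x' := by
      funext j; simp [shiftBy, shiftZ]
    rwa [this]
  induction m using Int.induction_on with
  | zero =>
      intro x hx
      have e : shiftBy 0 x = x := by funext j; simp [shiftBy]
      rwa [e]
  | succ n ih =>
      intro x hx
      have := h1 _ (ih x hx)
      rwa [shiftBy_shiftBy, add_comm] at this
  | pred n ih =>
      intro x hx
      have := hneg _ (ih x hx)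
      rw [shiftBy_shiftBy] at this
      have e : (-1 : ℤ) + -(n : ℤ) = -(n : ℤ) - 1 := by ring
      rwa [e] at this
      
lemma isClopen_cyl [TopologicalSpace Λ] [DiscreteTopology Λ] (C : List Λ) :
    IsClopen (cyl C) := by
  have : cyl C = ⋂ j : Fin C.length, (fun x : ℤ → Λ => x ((j : ℕ) : ℤ)) ⁻¹' {C.get j} := by
    ext x; simp [cyl, Set.mem_iInter]
  rw [this]
  exact isClopen_iInter_of_finite fun j => (isClopen_discrete _).preimage (continuous_apply _)

lemma borel_eq_clopens [Fintype Λ] [TopologicalSpace Λ] [DiscreteTopology Λ] [MeasurableSpace Λ]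
    [BorelSpace Λ] :
    (inferInstance : MeasurableSpace (ℤ → Λ)) =
      MeasurableSpace.generateFrom {A : Set (ℤ → Λ) | IsClopen A} := by
  refine le_antisymm ?_ (MeasurableSpace.generateFrom_le fun A hA => hA.isOpen.measurableSet)
  have hpi : (inferInstance : MeasurableSpace (ℤ → Λ)) = MeasurableSpace.pi := rfl
  rw [hpi]
  refine iSup_le fun i => ?_
  intro s hs
  obtain ⟨t, -, rfl⟩ := hs
  exact MeasurableSpace.measurableSet_generateFrom
    ((isClopen_discrete t).preimage (continuous_apply i))

end Aux
section Aux2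
variable {Λ : Type*}

open Classical in
/-- number of occurrences of `C` in the window `[0,k)` of `y` (allowing overhang). -/
noncomputable def matchCnt (y : ℤ → Λ) (C : List Λ) (k : ℕ) : ℕ :=
  ((Finset.range k).filter
    (fun m => ∀ j : Fin C.length, y ((m : ℕ) + (j : ℕ)) = C.get j)).card

open Classical in
lemma freq_eq (B C : List Λ) (hC : C ≠ []) :
    Freq B C = (((Finset.range B.length).filter
      (fun i => i + C.length ≤ B.length ∧
        ∀ j : Fin C.length, B[i + (j : ℕ)]? = C[(j : ℕ)]?)).card : ℝ) / (B.length : ℝ) := by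
  have hCl : 0 < C.length := List.length_pos_iff.mpr hC
  have hset : {i : ℕ | i + C.length ≤ B.length ∧
      ∀ j : Fin C.length, B[i + (j : ℕ)]? = C[(j : ℕ)]?}
      = ↑((Finset.range B.length).filter
        (fun i => i + C.length ≤ B.length ∧
          ∀ j : Fin C.length, B[i + (j : ℕ)]? = C[(j : ℕ)]?)) := by
    ext i
    simp only [Finset.coe_filter, Finset.mem_range, Set.mem_setOf_eq]
    constructor
    · rintro ⟨h1, h2⟩; exact ⟨by omega, h1, h2⟩
    · rintro ⟨-, h1, h2⟩; exact ⟨h1, h2⟩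
  rw [Freq, hset, Set.ncard_coe_finset]

end Aux2
section Aux3
variable {Λ : Type*}

open Classical in
/-- number of (full) occurrences of `C` in `B`. -/
noncomputable def occCnt (B C : List Λ) : ℕ :=
  ((Finset.range B.length).filter
    (fun i => i + C.length ≤ B.length ∧
      ∀ j : Fin C.length, B[i + (j : ℕ)]? = C[(j : ℕ)]?)).card

open Classical in
lemma freq_eq' (B C : List Λ) (hC : C ≠ []) :
    Freq B C = (occCnt B C : ℝ) / (B.length : ℝ) := by
  rw [freq_eq B C hC, occCnt]

lemma cond_iff (B C : List Λ) (y : ℤ → Λ)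
    (hy : ∀ (j : ℕ) (h : j < B.length), y (j : ℤ) = B.get ⟨j, h⟩)
    (i : ℕ) (hi : i + C.length ≤ B.length) :
    (∀ j : Fin C.length, B[i + (j : ℕ)]? = C[(j : ℕ)]?) ↔
      (∀ j : Fin C.length, y (((i : ℕ) : ℤ) + ((j : ℕ) : ℕ)) = C.get j) := by
  apply forall_congr'
  intro j
  have hij : i + (j : ℕ) < B.length := by have := j.isLt; omega
  rw [List.getElem?_eq_getElem hij, List.getElem?_eq_getElem j.isLt, Option.some_inj]
  have hyv : y (((i : ℕ) : ℤ) + ((j : ℕ) : ℕ)) = B.get ⟨i + (j : ℕ), hij⟩ := by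
    have h2 := hy (i + (j : ℕ)) hij
    have : (((i + (j : ℕ) : ℕ)) : ℤ) = ((i : ℕ) : ℤ) + ((j : ℕ) : ℕ) := by push_cast; ring
    rw [← this, h2]
  rw [hyv]
  simp [List.get_eq_getElem]

open Classical in
lemma occCnt_le_matchCnt (B C : List Λ) (hC : C ≠ []) (y : ℤ → Λ)
    (hy : ∀ (j : ℕ) (h : j < B.length), y (j : ℤ) = B.get ⟨j, h⟩) :
    occCnt B C ≤ matchCnt y C B.length := by
  apply Finset.card_le_card
  intro i hi
  simp only [Finset.mem_filter, Finset.mem_range] at hi ⊢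
  exact ⟨hi.1, (cond_iff B C y hy i hi.2.1).mp hi.2.2⟩

open Classical in
lemma matchCnt_le_occCnt (B C : List Λ) (hC : C ≠ []) (y : ℤ → Λ)
    (hy : ∀ (j : ℕ) (h : j < B.length), y (j : ℤ) = B.get ⟨j, h⟩) :
    matchCnt y C B.length ≤ occCnt B C + C.length := by
  have hsub : ((Finset.range B.length).filter
      (fun m => ∀ j : Fin C.length, y ((m : ℕ) + (j : ℕ)) = C.get j)) ⊆
      ((Finset.range B.length).filter
        (fun i => i + C.length ≤ B.length ∧
          ∀ j : Fin C.length, B[i + (j : ℕ)]? = C[(j : ℕ)]?)) ∪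
      Finset.Ico (B.length - C.length) B.length := by
    intro m hm
    simp only [Finset.mem_filter, Finset.mem_range] at hm
    by_cases h : m + C.length ≤ B.length
    · apply Finset.mem_union_left
      simp only [Finset.mem_filter, Finset.mem_range]
      exact ⟨hm.1, h, (cond_iff B C y hy m h).mpr hm.2⟩
    · apply Finset.mem_union_right
      simp only [Finset.mem_Ico]
      omega
  calc matchCnt y C B.length ≤ _ := Finset.card_le_card hsub
    _ ≤ occCnt B C + (Finset.Ico (B.length - C.length) B.length).card :=
        Finset.card_union_le _ _
    _ ≤ occCnt B C + C.length := by
        rw [Nat.card_Ico]; omega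

end Aux3
section Aux4
variable {Λ : Type*}

lemma freq_nonneg (B C : List Λ) : 0 ≤ Freq B C := by
  unfold Freq
  positivity

lemma mem_cyl_ofFn {m : ℕ} (C : Fin m → Λ) (x : ℤ → Λ) :
    x ∈ cyl (List.ofFn C) ↔ ∀ j : Fin m, x ((j : ℕ) : ℤ) = C j := by
  constructor
  · intro h j
    have := h (Fin.cast (List.length_ofFn (f := C)).symm j)
    simpa [List.get_ofFn] using this
  · intro h j
    have := h (Fin.cast (List.length_ofFn (f := C)) j)
    simp [List.get_ofFn] at this ⊢; exact this

open Classical in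
lemma sum_freq_le_one [Fintype Λ] (B : List Λ) (hB : B ≠ []) {m : ℕ} (hm : m ≠ 0) :
    ∑ C : Fin m → Λ, Freq B (List.ofFn C) ≤ 1 := by
  have hBl : 0 < B.length := List.length_pos_iff.mpr hB
  have hC : ∀ C : Fin m → Λ, List.ofFn C ≠ [] := by
    intro C h
    have := List.length_ofFn (f := C)
    rw [h] at this
    simp at this
    omega
  have hdisj : ∀ C C' : Fin m → Λ, C ≠ C' →
      Disjoint ((Finset.range B.length).filter
        (fun i => i + (List.ofFn C).length ≤ B.length ∧
          ∀ j : Fin (List.ofFn C).length, B[i + (j : ℕ)]? = (List.ofFn C)[(j : ℕ)]?))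
        ((Finset.range B.length).filter
        (fun i => i + (List.ofFn C').length ≤ B.length ∧
          ∀ j : Fin (List.ofFn C').length, B[i + (j : ℕ)]? = (List.ofFn C')[(j : ℕ)]?)) := by
    intro C C' hne
    rw [Finset.disjoint_left]
    intro i hi hi'
    simp only [Finset.mem_filter, Finset.mem_range] at hi hi'
    apply hne
    funext j
    have hj1 : ((Fin.cast (List.length_ofFn (f := C)).symm j : Fin (List.ofFn C).length) : ℕ) = (j : ℕ) := rfl
    have e1 := hi.2.2 (Fin.cast (List.length_ofFn (f := C)).symm j)
    have e2 := hi'.2.2 (Fin.cast (List.length_ofFn (f := C')).symm j)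
    rw [hj1] at e1
    have hj2 : ((Fin.cast (List.length_ofFn (f := C')).symm j : Fin (List.ofFn C').length) : ℕ) = (j : ℕ) := rfl
    rw [hj2] at e2
    have hjC : (List.ofFn C)[(j:ℕ)]? = some (C j) := by
      rw [List.getElem?_eq_getElem (by simp [List.length_ofFn])]
      simp
    have hjC' : (List.ofFn C')[(j:ℕ)]? = some (C' j) := by
      rw [List.getElem?_eq_getElem (by simp [List.length_ofFn])]
      simp
    rw [hjC] at e1
    rw [hjC'] at e2
    exact Option.some_inj.mp (e1.symm.trans e2)
  have hcard : ∑ C : Fin m → Λ, occCnt B (List.ofFn C) ≤ B.length := by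
    classical
    rw [show ∑ C : Fin m → Λ, occCnt B (List.ofFn C)
        = ∑ C ∈ Finset.univ, occCnt B (List.ofFn C) from rfl]
    unfold occCnt
    rw [← Finset.card_biUnion (fun C _ C' _ h => hdisj C C' h)]
    refine le_trans (Finset.card_le_card ?_) (le_of_eq (Finset.card_range B.length))
    intro i hi
    simp only [Finset.mem_biUnion] at hi
    obtain ⟨C, -, hC2⟩ := hi
    exact Finset.mem_range.mpr (Finset.mem_range.mp (Finset.mem_filter.mp hC2).1)
  calc ∑ C : Fin m → Λ, Freq B (List.ofFn C)
      = (∑ C : Fin m → Λ, (occCnt B (List.ofFn C) : ℝ)) / (B.length : ℝ) := by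
        rw [Finset.sum_div]
        exact Finset.sum_congr rfl fun C _ => freq_eq' B _ (hC C)
    _ ≤ 1 := by
        rw [div_le_one (by exact_mod_cast hBl)]
        exact_mod_cast hcard
end Aux4
section Aux5
variable {Λ : Type*} [Fintype Λ] [TopologicalSpace Λ] [DiscreteTopology Λ]
  [MeasurableSpace Λ] [BorelSpace Λ]

lemma sum_cyl_le_one (μ : Measure (ℤ → Λ)) [IsProbabilityMeasure μ] (m : ℕ) :
    ∑ C : Fin m → Λ, (μ (cyl (List.ofFn C))).toReal ≤ 1 := by
  classical
  have hfin : ∀ C : Fin m → Λ, μ (cyl (List.ofFn C)) ≠ ∞ :=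
    fun C => (measure_lt_top μ _).ne
  rw [← ENNReal.toReal_sum (fun C _ => hfin C)]
  have hdisj : (↑(Finset.univ : Finset (Fin m → Λ)) : Set (Fin m → Λ)).PairwiseDisjoint
      (fun C => cyl (List.ofFn C)) := by
    intro C _ C' _ hne
    refine Set.disjoint_left.mpr fun x hx hx' => hne ?_
    funext j
    rw [← (mem_cyl_ofFn C x).mp hx j, ← (mem_cyl_ofFn C' x).mp hx' j]
  rw [measure_biUnion_finset hdisj
      (fun C _ => (isClopen_cyl (List.ofFn C)).isOpen.measurableSet) |>.symm]
  have hmono := measure_mono (μ := μ) (Set.subset_univ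
    (⋃ C ∈ (Finset.univ : Finset (Fin m → Λ)), cyl (List.ofFn C)))
  refine le_trans (ENNReal.toReal_mono (measure_ne_top μ _) hmono) (by simp)

lemma two_zpow_eq (l : ℕ) : (2 : ℝ) ^ (-(l : ℤ) - 1) = (1/2 : ℝ) ^ (l + 1) := by
  rw [one_div, inv_pow, ← zpow_natCast (2:ℝ) (l+1), ← zpow_neg]
  congr 1
  push_cast
  ring

lemma dStar_term_bound (B : List Λ) (hB : B ≠ []) (μ : Measure (ℤ → Λ))
    [IsProbabilityMeasure μ] (l : ℕ) :
    (2 : ℝ) ^ (-(l : ℤ) - 1) *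
      ∑ C : Fin (l + 1) → Λ, |objVal (Sum.inl B) (List.ofFn C) -
        objVal (Sum.inr μ) (List.ofFn C)| ≤ (1/2 : ℝ) ^ l := by
  have h1 : ∑ C : Fin (l + 1) → Λ, |objVal (Sum.inl B) (List.ofFn C) -
      objVal (Sum.inr μ) (List.ofFn C)| ≤ 2 := by
    have step : ∀ C : Fin (l+1) → Λ, |objVal (Sum.inl B) (List.ofFn C) -
        objVal (Sum.inr μ) (List.ofFn C)|
        ≤ Freq B (List.ofFn C) + (μ (cyl (List.ofFn C))).toReal := by
      intro C
      have h0 : 0 ≤ Freq B (List.ofFn C) := freq_nonneg _ _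
      have h0' : (0:ℝ) ≤ (μ (cyl (List.ofFn C))).toReal := ENNReal.toReal_nonneg
      simp only [objVal]
      rw [abs_sub_le_iff]
      constructor <;> nlinarith
    refine le_trans (Finset.sum_le_sum (fun C _ => step C)) ?_
    rw [Finset.sum_add_distrib]
    have := add_le_add (sum_freq_le_one B hB (Nat.succ_ne_zero l)) (sum_cyl_le_one μ (l+1))
    linarith
  have h2 : (0:ℝ) < (2 : ℝ) ^ (-(l : ℤ) - 1) := by positivity
  have h3 : (2 : ℝ) ^ (-(l : ℤ) - 1) * 2 = (1/2 : ℝ) ^ l := by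
    rw [two_zpow_eq, pow_succ]
    ring
  nlinarith [mul_le_mul_of_nonneg_left h1 h2.le]

lemma dStar_term_nonneg (B : List Λ) (μ : Measure (ℤ → Λ)) (l : ℕ) :
    0 ≤ (2 : ℝ) ^ (-(l : ℤ) - 1) *
      ∑ C : Fin (l + 1) → Λ, |objVal (Sum.inl B) (List.ofFn C) -
        objVal (Sum.inr μ) (List.ofFn C)| := by
  apply mul_nonneg (by positivity)
  exact Finset.sum_nonneg fun C _ => abs_nonneg _

lemma dStar_summable (B : List Λ) (hB : B ≠ []) (μ : Measure (ℤ → Λ))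
    [IsProbabilityMeasure μ] :
    Summable (fun l : ℕ => (2 : ℝ) ^ (-(l : ℤ) - 1) *
      ∑ C : Fin (l + 1) → Λ, |objVal (Sum.inl B) (List.ofFn C) -
        objVal (Sum.inr μ) (List.ofFn C)|) := by
  apply Summable.of_nonneg_of_le (dStar_term_nonneg B μ) (dStar_term_bound B hB μ)
  exact summable_geometric_of_lt_one (by norm_num) (by norm_num)

lemma dStar_le_head_tail (B : List Λ) (hB : B ≠ []) (μ : Measure (ℤ → Λ))
    [IsProbabilityMeasure μ] (L : ℕ) :
    dStar (Sum.inl B) (Sum.inr μ) ≤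
      (∑ l ∈ Finset.range L, (2 : ℝ) ^ (-(l : ℤ) - 1) *
        ∑ C : Fin (l + 1) → Λ, |objVal (Sum.inl B) (List.ofFn C) -
          objVal (Sum.inr μ) (List.ofFn C)|) + 2 * (1/2 : ℝ) ^ L := by
  set f := fun l : ℕ => (2 : ℝ) ^ (-(l : ℤ) - 1) *
    ∑ C : Fin (l + 1) → Λ, |objVal (Sum.inl B) (List.ofFn C) -
      objVal (Sum.inr μ) (List.ofFn C)| with hf
  have hsum : Summable f := dStar_summable B hB μ
  have hsplit : (∑ l ∈ Finset.range L, f l) + ∑' l : ℕ, f (l + L)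
      = dStar (Sum.inl B) (Sum.inr μ) := Summable.sum_add_tsum_nat_add L hsum
  have htail : ∑' l : ℕ, f (l + L) ≤ ∑' l : ℕ, (1/2 : ℝ) ^ (l + L) := by
    refine Summable.tsum_le_tsum (fun l => dStar_term_bound B hB μ (l + L)) ?_ ?_
    · exact (summable_nat_add_iff L).mpr hsum
    · exact (summable_nat_add_iff L).mpr
        (summable_geometric_of_lt_one (by norm_num) (by norm_num))
  have hgeo : ∑' l : ℕ, (1/2 : ℝ) ^ (l + L) = 2 * (1/2 : ℝ) ^ L := by
    have : ∀ l : ℕ, (1/2 : ℝ) ^ (l + L) = (1/2:ℝ)^L * (1/2:ℝ)^l := by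
      intro l; rw [pow_add]; ring
    rw [tsum_congr this, tsum_mul_left, tsum_geometric_two]
    ring
  rw [← hsplit]
  rw [hgeo] at htail
  linarith
end Aux5
theorem blocks_close_to_invariant_measures
    {Λ : Type*} [Fintype Λ] [TopologicalSpace Λ] [DiscreteTopology Λ]
    [MeasurableSpace Λ] [BorelSpace Λ]
    (X : Set (ℤ → Λ)) (hX : IsSubshift X) (ε : ℝ) (hε : 0 < ε) :
    ∃ l₀ : ℕ, ∀ B ∈ BlocksOf X, l₀ ≤ B.length →
      ∃ μ ∈ InvMeasOf X, dStar (Sum.inl B) (Sum.inr μ) < ε := by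
  classical
  by_contra hcon
  push_neg at hcon
  have hXcl : IsClosed X := hX.2.1
  have hσX : shiftZ '' X = X := hX.2.2
  choose B hBmem hBlen hBfar using fun n : ℕ => hcon (n + 1)
  set k : ℕ → ℕ := fun n => (B n).length with hk
  have hkn : ∀ n, n + 1 ≤ k n := hBlen
  have hkpos : ∀ n, 0 < k n := fun n => lt_of_lt_of_le (Nat.succ_pos n) (hBlen n)
  have hBne : ∀ n, B n ≠ [] := fun n => List.ne_nil_of_length_pos (hkpos n)
  -- realizing points
  have hyex : ∀ n, ∃ y ∈ X, ∀ (j : ℕ) (h : j < (B n).length),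
      y (j : ℤ) = (B n).get ⟨j, h⟩ := by
    intro n
    obtain ⟨-, x, hxX, i, hbl⟩ := hBmem n
    refine ⟨shiftBy i x, shiftBy_mem hσX i x hxX, ?_⟩
    intro j hj
    have hj' : j < (blockAt x i (B n).length).length := by
      simp [blockAt]
      omega
    have hget := List.get_of_eq hbl.symm ⟨j, hj⟩
    rw [hget]
    simp [blockAt, List.get_ofFn, shiftBy, add_comm]
  choose y hyX hyval using hyex
  have hyXm : ∀ n (m : ℤ), shiftBy m (y n) ∈ X := fun n m => shiftBy_mem hσX m _ (hyX n)
  -- empirical measures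
  set ν : ℕ → Measure (ℤ → Λ) := fun n => ((k n : ℝ≥0∞))⁻¹ •
    ∑ m ∈ Finset.range (k n), Measure.dirac (shiftBy (m : ℤ) (y n)) with hν
  have hν_apply : ∀ n (A : Set (ℤ → Λ)), MeasurableSet A →
      ν n A = (k n : ℝ≥0∞)⁻¹ * ∑ m ∈ Finset.range (k n),
        (if shiftBy (m : ℤ) (y n) ∈ A then 1 else 0) := by
    intro n A hA
    rw [hν]
    simp only [Measure.smul_apply, Measure.finset_sum_apply, smul_eq_mul]
    congr 1
    refine Finset.sum_congr rfl fun m _ => ?_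
    rw [Measure.dirac_apply' _ hA, Set.indicator_apply]
    simp
  have hkENN0 : ∀ n, (k n : ℝ≥0∞) ≠ 0 := fun n => by
    exact_mod_cast (hkpos n).ne'
  have hkENNt : ∀ n, (k n : ℝ≥0∞) ≠ ∞ := fun n => ENNReal.natCast_ne_top _
  have hν1 : ∀ n, ν n Set.univ = 1 := by
    intro n
    rw [hν_apply n Set.univ MeasurableSet.univ]
    simp only [Set.mem_univ, if_true, Finset.sum_const, Finset.card_range, nsmul_eq_mul, mul_one]
    exact ENNReal.inv_mul_cancel (hkENN0 n) (hkENNt n)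
  have hνle1 : ∀ n (A : Set (ℤ → Λ)), ν n A ≤ 1 := fun n A =>
    le_trans (measure_mono (Set.subset_univ A)) (le_of_eq (hν1 n))
  have hνXc : ∀ n, ν n Xᶜ = 0 := by
    intro n
    rw [hν_apply n Xᶜ hXcl.measurableSet.compl]
    rw [Finset.sum_eq_zero, mul_zero]
    intro m _
    rw [if_neg]
    simp only [Set.mem_compl_iff, not_not]
    exact hyXm n m
  -- ultrafilter limit
  set U : Ultrafilter ℕ := Ultrafilter.of atTop with hU
  have hUle : (U : Filter ℕ) ≤ atTop := Ultrafilter.of_le _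
  set Lf : Set (ℤ → Λ) → ℝ≥0∞ := fun A => (U.map (fun n => ν n A)).lim with hLf
  have hL : ∀ A : Set (ℤ → Λ), Filter.Tendsto (fun n => ν n A) U (𝓝 (Lf A)) := by
    intro A
    have h := Ultrafilter.le_nhds_lim (U.map (fun n => ν n A))
    rwa [Ultrafilter.coe_map] at h
  have hLle1 : ∀ A, Lf A ≤ 1 := fun A =>
    le_of_tendsto (hL A) (Filter.Eventually.of_forall (fun n => hνle1 n A))
  have hLne : ∀ A, Lf A ≠ ∞ := fun A => (lt_of_le_of_lt (hLle1 A) ENNReal.one_lt_top).ne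
  have hLmono : ∀ {A A' : Set (ℤ → Λ)}, A ⊆ A' → Lf A ≤ Lf A' := by
    intro A A' h
    exact le_of_tendsto_of_tendsto' (hL A) (hL A') (fun n => measure_mono h)
  have hLuniv : Lf Set.univ = 1 := by
    refine tendsto_nhds_unique (hL Set.univ) ?_
    simp only [hν1]
    exact tendsto_const_nhds
  have hLXc : Lf Xᶜ = 0 := by
    refine tendsto_nhds_unique (hL Xᶜ) ?_
    simp only [hνXc]
    exact tendsto_const_nhds
  -- the content and its measure
  set c : Content (ℤ → Λ) :=
    { toFun := fun K => (Lf K).toNNReal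
      mono' := fun K₁ K₂ h => ENNReal.toNNReal_mono (hLne _) (hLmono h)
      sup_disjoint' := by
        intro K₁ K₂ hd h₁ h₂
        have hadd : Lf ((K₁ ⊔ K₂ : TopologicalSpace.Compacts (ℤ → Λ)) : Set (ℤ → Λ))
            = Lf K₁ + Lf K₂ := by
          have he : ∀ n, ν n ((K₁ ⊔ K₂ : TopologicalSpace.Compacts (ℤ → Λ)) : Set (ℤ → Λ))
              = ν n K₁ + ν n K₂ := by
            intro n
            rw [TopologicalSpace.Compacts.coe_sup]
            exact measure_union hd h₂.measurableSet
          exact tendsto_nhds_unique (Filter.Tendsto.congr he (hL _))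
            ((hL (K₁ : Set (ℤ → Λ))).add (hL (K₂ : Set (ℤ → Λ))))
        show ((Lf ((K₁ ⊔ K₂ : TopologicalSpace.Compacts (ℤ → Λ)) : Set (ℤ → Λ))).toNNReal) = _
        rw [hadd, ENNReal.toNNReal_add (hLne _) (hLne _)]
      sup_le' := by
        intro K₁ K₂
        have hle : Lf ((K₁ ⊔ K₂ : TopologicalSpace.Compacts (ℤ → Λ)) : Set (ℤ → Λ))
            ≤ Lf K₁ + Lf K₂ := by
          refine le_of_tendsto_of_tendsto' (hL _) ((hL _).add (hL _)) (fun n => ?_)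
          rw [TopologicalSpace.Compacts.coe_sup]
          exact measure_union_le _ _
        have h2 := ENNReal.toNNReal_mono (ENNReal.add_ne_top.mpr ⟨hLne _, hLne _⟩) hle
        rwa [ENNReal.toNNReal_add (hLne _) (hLne _)] at h2 } with hc
  set μ := c.measure with hμdef
  have hclopen : ∀ A : Set (ℤ → Λ), IsClopen A → μ A = Lf A := by
    intro A hA
    have hAc : IsCompact A := hA.isClosed.isCompact
    rw [hμdef, Content.measure_apply c hA.isOpen.measurableSet]
    have h1 : c.outerMeasure A = c.innerContent ⟨A, hA.isOpen⟩ :=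
      c.outerMeasure_opens ⟨A, hA.isOpen⟩
    rw [h1, c.innerContent_of_isCompact hAc hA.isOpen]
    exact ENNReal.coe_toNNReal (hLne A)
  have hμuniv : μ Set.univ = 1 := by rw [hclopen _ isClopen_univ, hLuniv]
  haveI hμprob : IsProbabilityMeasure μ := ⟨hμuniv⟩
  have hμXc : μ Xᶜ = 0 := by
    rw [hμdef, Content.measure_apply c hXcl.measurableSet.compl]
    have h1 : c.outerMeasure Xᶜ = c.innerContent ⟨Xᶜ, hXcl.isOpen_compl⟩ :=
      c.outerMeasure_opens ⟨Xᶜ, hXcl.isOpen_compl⟩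
    rw [h1, Content.innerContent]
    refine le_antisymm (iSup₂_le fun K hK => ?_) zero_le
    have hK0 : Lf (K : Set (ℤ → Λ)) = 0 :=
      le_antisymm (le_trans (hLmono hK) (le_of_eq hLXc)) zero_le
    show ((Lf (K : Set (ℤ → Λ))).toNNReal : ℝ≥0∞) ≤ 0
    simp [hK0]
  have hμX : μ X = 1 := by
    have h := measure_add_measure_compl (μ := μ) hXcl.measurableSet
    rw [hμXc, add_zero, hμuniv] at h
    exact h
  -- invariance
  have hσcont : Continuous (shiftZ : (ℤ → Λ) → (ℤ → Λ)) := continuous_shiftZ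
  have hσmeas : Measurable (shiftZ : (ℤ → Λ) → (ℤ → Λ)) := hσcont.measurable
  have hshift1 : ∀ (m : ℕ) (z : ℤ → Λ),
      shiftZ (shiftBy (m : ℤ) z) = shiftBy ((m + 1 : ℕ) : ℤ) z := by
    intro m z; funext j; simp only [shiftZ, shiftBy]; congr 1; push_cast; ring
  have hνshift : ∀ n (A : Set (ℤ → Λ)), MeasurableSet A →
      ν n (shiftZ ⁻¹' A) ≤ ν n A + (k n : ℝ≥0∞)⁻¹ ∧
      ν n A ≤ ν n (shiftZ ⁻¹' A) + (k n : ℝ≥0∞)⁻¹ := by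
    intro n A hA
    set f : ℕ → ℝ≥0∞ := fun m => if shiftBy (m : ℤ) (y n) ∈ A then 1 else 0 with hfd
    have hf1 : ∀ m, f m ≤ 1 := by intro m; rw [hfd]; dsimp only; split <;> simp
    have hpre : ν n (shiftZ ⁻¹' A)
        = (k n : ℝ≥0∞)⁻¹ * ∑ m ∈ Finset.range (k n), f (m + 1) := by
      rw [hν_apply n _ (hσmeas hA)]
      congr 1
      refine Finset.sum_congr rfl fun m _ => ?_
      rw [hfd]
      simp only [Set.mem_preimage, hshift1 m (y n)]
    have hcur : ν n A = (k n : ℝ≥0∞)⁻¹ * ∑ m ∈ Finset.range (k n), f m := hν_apply n A hA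
    have e1 : (∑ m ∈ Finset.range (k n), f (m + 1)) + f 0
        = ∑ m ∈ Finset.range (k n + 1), f m := (Finset.sum_range_succ' f (k n)).symm
    have e2 : ∑ m ∈ Finset.range (k n + 1), f m
        = (∑ m ∈ Finset.range (k n), f m) + f (k n) := Finset.sum_range_succ f (k n)
    have hsum1 : ∑ m ∈ Finset.range (k n), f (m + 1)
        ≤ (∑ m ∈ Finset.range (k n), f m) + 1 := by
      calc ∑ m ∈ Finset.range (k n), f (m + 1)
          ≤ (∑ m ∈ Finset.range (k n), f (m + 1)) + f 0 := le_self_add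
        _ = (∑ m ∈ Finset.range (k n), f m) + f (k n) := by rw [e1, e2]
        _ ≤ _ := add_le_add_right (hf1 _) _
    have hsum2 : ∑ m ∈ Finset.range (k n), f m
        ≤ (∑ m ∈ Finset.range (k n), f (m + 1)) + 1 := by
      calc ∑ m ∈ Finset.range (k n), f m
          ≤ ∑ m ∈ Finset.range (k n + 1), f m :=
            Finset.sum_le_sum_of_subset (Finset.range_subset_range.mpr (Nat.le_succ _))
        _ = (∑ m ∈ Finset.range (k n), f (m + 1)) + f 0 := e1.symm
        _ ≤ _ := add_le_add_right (hf1 _) _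
    constructor
    · rw [hpre, hcur]
      calc (k n : ℝ≥0∞)⁻¹ * ∑ m ∈ Finset.range (k n), f (m + 1)
          ≤ (k n : ℝ≥0∞)⁻¹ * ((∑ m ∈ Finset.range (k n), f m) + 1) :=
            mul_le_mul_right hsum1 _
        _ = (k n : ℝ≥0∞)⁻¹ * (∑ m ∈ Finset.range (k n), f m) + (k n : ℝ≥0∞)⁻¹ := by
            rw [mul_add, mul_one]
    · rw [hpre, hcur]
      calc (k n : ℝ≥0∞)⁻¹ * ∑ m ∈ Finset.range (k n), f m
          ≤ (k n : ℝ≥0∞)⁻¹ * ((∑ m ∈ Finset.range (k n), f (m + 1)) + 1) :=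
            mul_le_mul_right hsum2 _
        _ = (k n : ℝ≥0∞)⁻¹ * (∑ m ∈ Finset.range (k n), f (m + 1)) + (k n : ℝ≥0∞)⁻¹ := by
            rw [mul_add, mul_one]
  have hinv0 : Filter.Tendsto (fun n => (k n : ℝ≥0∞)⁻¹) U (𝓝 0) := by
    have hup : Filter.Tendsto (fun n : ℕ => ((n + 1 : ℕ) : ℝ≥0∞)⁻¹) atTop (𝓝 0) := by
      exact ENNReal.tendsto_inv_nat_nhds_zero.comp (tendsto_add_atTop_nat 1)
    have hsq : Filter.Tendsto (fun n => (k n : ℝ≥0∞)⁻¹) atTop (𝓝 0) := by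
      refine tendsto_of_tendsto_of_tendsto_of_le_of_le tendsto_const_nhds hup
        (fun n => zero_le) (fun n => ?_)
      exact ENNReal.inv_le_inv' (by exact_mod_cast hkn n)
    exact hsq.mono_left hUle
  have hLσ : ∀ A : Set (ℤ → Λ), IsClopen A → Lf (shiftZ ⁻¹' A) = Lf A := by
    intro A hA
    have hAm := hA.isOpen.measurableSet
    have h1 : Lf (shiftZ ⁻¹' A) ≤ Lf A := by
      have h := le_of_tendsto_of_tendsto' (hL (shiftZ ⁻¹' A)) ((hL A).add hinv0)
        (fun n => (hνshift n A hAm).1)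
      simpa using h
    have h2 : Lf A ≤ Lf (shiftZ ⁻¹' A) := by
      have h := le_of_tendsto_of_tendsto' (hL A) ((hL (shiftZ ⁻¹' A)).add hinv0)
        (fun n => (hνshift n A hAm).2)
      simpa using h
    exact le_antisymm h1 h2
  haveI : IsFiniteMeasure (Measure.map shiftZ μ) := by
    constructor
    rw [Measure.map_apply hσmeas MeasurableSet.univ]
    simp [hμuniv]
  have hmap : Measure.map shiftZ μ = μ := by
    refine ext_of_generate_finite {A : Set (ℤ → Λ) | IsClopen A} borel_eq_clopens ?_ ?_ ?_
    · intro s hs t ht _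
      exact hs.inter ht
    · intro A hA
      rw [Measure.map_apply hσmeas hA.isOpen.measurableSet,
        hclopen _ (hA.preimage hσcont), hclopen _ hA, hLσ A hA]
    · rw [Measure.map_apply hσmeas MeasurableSet.univ]
      simp
  have hμInv : μ ∈ InvMeasOf X := ⟨⟨hμprob, hμX⟩, hmap⟩
  -- frequencies converge to cylinder measures along U
  have hfreq : ∀ {m : ℕ} (C : Fin (m + 1) → Λ),
      Filter.Tendsto (fun n => Freq (B n) (List.ofFn C)) U
        (𝓝 ((μ (cyl (List.ofFn C))).toReal)) := by
    intro m C
    set C' : List Λ := List.ofFn C with hC'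
    have hC'len : C'.length = m + 1 := by rw [hC']; exact List.length_ofFn (f := C)
    have hC'ne : C' ≠ [] := List.ne_nil_of_length_pos (by omega)
    have hclop := isClopen_cyl C'
    have hμc : μ (cyl C') = Lf (cyl C') := hclopen _ hclop
    have hνc : ∀ n, ν n (cyl C')
        = (k n : ℝ≥0∞)⁻¹ * ((matchCnt (y n) C' (k n) : ℕ) : ℝ≥0∞) := by
      intro n
      rw [hν_apply n _ hclop.isOpen.measurableSet]
      congr 1
      rw [matchCnt, Finset.sum_boole]
      refine congrArg _ (congrArg Finset.card (Finset.filter_congr ?_))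
      intro mm _
      simp only [cyl, Set.mem_setOf_eq, shiftBy]
      constructor
      · intro h j; rw [add_comm]; exact h j
      · intro h j; rw [add_comm]; exact h j
    have hνcR : ∀ n, (ν n (cyl C')).toReal
        = (matchCnt (y n) C' (k n) : ℝ) / (k n : ℝ) := by
      intro n
      rw [hνc n, ENNReal.toReal_mul, ENNReal.toReal_inv, ENNReal.toReal_natCast, ENNReal.toReal_natCast]
      ring
    have hdiff : ∀ n, |Freq (B n) C' - (ν n (cyl C')).toReal|
        ≤ (C'.length : ℝ) / ((n : ℝ) + 1) := by
      intro n
      rw [freq_eq' (B n) C' hC'ne, hνcR n]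
      have h1 : occCnt (B n) C' ≤ matchCnt (y n) C' (k n) :=
        occCnt_le_matchCnt (B n) C' hC'ne (y n) (hyval n)
      have h2 : matchCnt (y n) C' (k n) ≤ occCnt (B n) C' + C'.length :=
        matchCnt_le_occCnt (B n) C' hC'ne (y n) (hyval n)
      have hkr : (0:ℝ) < (k n : ℝ) := by exact_mod_cast hkpos n
      have hnk : ((n:ℝ) + 1) ≤ (k n : ℝ) := by exact_mod_cast hkn n
      have c1 : ((occCnt (B n) C' : ℕ) : ℝ) ≤ ((matchCnt (y n) C' (k n) : ℕ) : ℝ) :=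
        Nat.cast_le.mpr h1
      have c2 : ((matchCnt (y n) C' (k n) : ℕ) : ℝ)
          ≤ ((occCnt (B n) C' : ℕ) : ℝ) + (C'.length : ℝ) := by exact_mod_cast h2
      have habs : |((occCnt (B n) C' : ℕ) : ℝ) - ((matchCnt (y n) C' (k n) : ℕ) : ℝ)|
          ≤ (C'.length : ℝ) := by
        rw [abs_le]
        constructor <;> linarith
      calc |((occCnt (B n) C' : ℕ) : ℝ) / (k n : ℝ)
            - ((matchCnt (y n) C' (k n) : ℕ) : ℝ) / (k n : ℝ)|
          = |((occCnt (B n) C' : ℕ) : ℝ) - ((matchCnt (y n) C' (k n) : ℕ) : ℝ)| / (k n : ℝ) := by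
            rw [div_sub_div_same, abs_div, abs_of_pos hkr]
        _ ≤ (C'.length : ℝ) / (k n : ℝ) := by gcongr
        _ ≤ (C'.length : ℝ) / ((n : ℝ) + 1) := by
            gcongr
    have hd0 : Filter.Tendsto (fun n => Freq (B n) C' - (ν n (cyl C')).toReal) U (𝓝 0) := by
      have h0 : Filter.Tendsto (fun n : ℕ => (C'.length : ℝ) * (1 / ((n:ℝ) + 1))) atTop
          (𝓝 ((C'.length : ℝ) * 0)) :=
        tendsto_const_nhds.mul tendsto_one_div_add_atTop_nhds_zero_nat
      rw [mul_zero] at h0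
      refine squeeze_zero_norm (fun n => ?_) (h0.mono_left hUle)
      rw [Real.norm_eq_abs]
      simpa [mul_one_div, div_eq_mul_inv] using hdiff n
    have hνR : Filter.Tendsto (fun n => (ν n (cyl C')).toReal) U (𝓝 ((Lf (cyl C')).toReal)) :=
      (ENNReal.tendsto_toReal (hLne _)).comp (hL _)
    have hadd := hνR.add hd0
    rw [add_zero] at hadd
    have heq : (fun n => (ν n (cyl C')).toReal + (Freq (B n) C' - (ν n (cyl C')).toReal))
        = fun n => Freq (B n) C' := by funext n; ring
    rw [heq] at hadd
    rw [hμc]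
    exact hadd
  obtain ⟨LL, hLL⟩ : ∃ LL : ℕ, 2 * (1/2 : ℝ) ^ LL < ε := by
    obtain ⟨L0, hL0⟩ := exists_pow_lt_of_lt_one (half_pos hε) (by norm_num : (1/2 : ℝ) < 1)
    exact ⟨L0, by linarith⟩
  have hhead : Filter.Tendsto (fun n => ∑ l ∈ Finset.range LL, (2:ℝ) ^ (-(l:ℤ) - 1) *
      ∑ C : Fin (l+1) → Λ, |objVal (Sum.inl (B n)) (List.ofFn C)
        - objVal (Sum.inr μ) (List.ofFn C)|) U (𝓝 0) := by
    have h0 : Filter.Tendsto (fun n => ∑ l ∈ Finset.range LL, (2:ℝ) ^ (-(l:ℤ) - 1) *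
        ∑ C : Fin (l+1) → Λ, |objVal (Sum.inl (B n)) (List.ofFn C)
          - objVal (Sum.inr μ) (List.ofFn C)|) U
        (𝓝 (∑ l ∈ Finset.range LL, (2:ℝ) ^ (-(l:ℤ) - 1) * ∑ _C : Fin (l+1) → Λ, (0:ℝ))) := by
      apply tendsto_finset_sum
      intro l _
      apply Filter.Tendsto.const_mul
      apply tendsto_finset_sum
      intro C _
      have h1 := (hfreq C).sub
        (tendsto_const_nhds (x := (μ (cyl (List.ofFn C))).toReal) (f := (U : Filter ℕ)))
      rw [sub_self] at h1
      have h2 := h1.abs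
      rw [abs_zero] at h2
      simp only [objVal]
      exact h2
    simpa using h0
  have hεpos : (0:ℝ) < ε - 2 * (1/2 : ℝ) ^ LL := by linarith
  have hev := hhead.eventually_lt_const hεpos
  obtain ⟨n, hn⟩ := hev.exists
  have hb := dStar_le_head_tail (B n) (hBne n) μ LL
  have hfar := hBfar n μ hμInv
  linarith
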